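/- With S the 4×4 matrix with rows (1,0,0,1),(0,1,1,0),(0,1,-1,0),(1,0,0,-1), and A=(a_{ij}), B=(b_{ij}) 2×2 real matrices, the matrix S·diag(A,B)·S⁻¹ is a Markov matrix if and only if A is a Markov matrix and |b22| ≤ a11, |b21| ≤ a12, |b12| ≤ a21, |b11| ≤ a22. -/

import Mathlib

open Matrix

/-- A Markov matrix: nonnegative entries, rows summing to one. -/
def IsMarkov {n : ℕ} (M : Matrix (Fin n) (Fin n) ℝ) : Prop :=
  (∀ i j, 0 ≤ M i j) ∧ ∀ i, ∑ j, M i j = 1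

set_option maxHeartbeats 1000000 in
theorem conj_aux (A B : Matrix (Fin 2) (Fin 2) ℝ) :
    let S : Matrix (Fin 4) (Fin 4) ℝ :=
      !![1, 0, 0, 1; 0, 1, 1, 0; 0, 1, -1, 0; 1, 0, 0, -1]
    let C : Matrix (Fin 4) (Fin 4) ℝ :=
      !![A 0 0, A 0 1, 0, 0;
         A 1 0, A 1 1, 0, 0;
         0, 0, B 0 0, B 0 1;
         0, 0, B 1 0, B 1 1]
    IsMarkov (S * C * S⁻¹) ↔
      (IsMarkov A ∧ |B 1 1| ≤ A 0 0 ∧ |B 1 0| ≤ A 0 1 ∧ |B 0 1| ≤ A 1 0 ∧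
        |B 0 0| ≤ A 1 1) := by
  intro S C
  have hSinv : S⁻¹ = (2:ℝ)⁻¹ • S := by
    apply inv_eq_right_inv
    ext i j
    fin_cases i <;> fin_cases j <;>
      simp [S, mul_apply, Fin.sum_univ_four] <;> norm_num
  rw [hSinv]
  simp only [IsMarkov, Fin.forall_fin_succ, Fin.forall_fin_zero_pi,
    Fin.sum_univ_four, Fin.sum_univ_two, mul_apply, Matrix.smul_apply, S, C]
  norm_num [Matrix.vecHead, Matrix.vecTail, Matrix.cons_val_two, Matrix.cons_val_three]
  constructor
  · rintro ⟨⟨⟨h1,h2,h3,h4⟩,⟨h5,h6,h7,h8⟩,_,_⟩, e1,e2,e3,e4⟩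
    refine ⟨⟨⟨⟨?_,?_⟩,?_,?_⟩,?_,?_⟩,?_,?_,?_,?_⟩ <;>
      first
        | (rw [abs_le]; constructor <;> linarith)
        | linarith
  · rintro ⟨⟨⟨⟨p1,p2⟩,p3,p4⟩,s1,s2⟩,e1,e2,e3,e4⟩
    rw [abs_le] at e1 e2 e3 e4
    refine ⟨⟨⟨?_,?_,?_,?_⟩,⟨?_,?_,?_,?_⟩,⟨?_,?_,?_,?_⟩,?_,?_,?_,?_⟩,?_,?_,?_,?_⟩ <;>
      linarith [e1.1,e1.2,e2.1,e2.2,e3.1,e3.2,e4.1,e4.2]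


/-- `S · diag(A,B) · S⁻¹` is Markov iff `A` is Markov and `B` is entrywise dominated by `A`
(transposed about the center). -/
theorem blockDiagonal_conj_isMarkov_iff (A B : Matrix (Fin 2) (Fin 2) ℝ) :
    let S : Matrix (Fin 4) (Fin 4) ℝ :=
      !![1, 0, 0, 1; 0, 1, 1, 0; 0, 1, -1, 0; 1, 0, 0, -1]
    let C : Matrix (Fin 4) (Fin 4) ℝ :=
      !![A 0 0, A 0 1, 0, 0;
         A 1 0, A 1 1, 0, 0;
         0, 0, B 0 0, B 0 1;
         0, 0, B 1 0, B 1 1]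
    IsMarkov (S * C * S⁻¹) ↔
      (IsMarkov A ∧ |B 1 1| ≤ A 0 0 ∧ |B 1 0| ≤ A 0 1 ∧ |B 0 1| ≤ A 1 0 ∧
        |B 0 0| ≤ A 1 1) := conj_aux A B
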